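/- Let A be a complete normed unital algebra (Banach algebra) with submultiplicative norm and ‖1‖ = 1, C > 0, and let (a_{r,s})_{0 ≤ r ≤ s} be a family of elements of A such that ‖a_{r,s}‖ ≤ (s − r)·C for all r ≤ s and a_{r,t} = a_{r,s} + a_{s,t} whenever r < s < t. Set g_{r,s} := 1 + a_{r,s} and let U_{r,s} denote the limit of the net of ordered products Θ_α over partitions α of [r,s]. Then for all 0 ≤ r < s one has ‖U_{r,s} − g_{r,s}‖ ≤ (1/2)·(s − r)²·C²·exp(C·(s − r)). -/

import Mathlib

/-- A partition of the interval `[R, S]`: a finite set of reals containing `R` and `S`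
all of whose elements lie in `[R, S]`. -/
def IsPartition (R S : ℝ) (α : Finset ℝ) : Prop :=
  R ∈ α ∧ S ∈ α ∧ ∀ t ∈ α, R ≤ t ∧ t ≤ S

/-- The list of consecutive pairs `(t₁,t₂), (t₂,t₃), …` of the elements of a finite set
of reals, sorted increasingly. -/
noncomputable def consecPairs (α : Finset ℝ) : List (ℝ × ℝ) :=
  (α.sort (· ≤ ·)).zip (α.sort (· ≤ ·)).tail

/-- The ordered product `g t₁ t₂ * g t₂ t₃ * ⋯ * g tₙ tₙ₊₁` over the consecutive points
`t₁ < t₂ < … < tₙ₊₁` of a partition, taken in increasing order. -/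
noncomputable def partitionProd {A : Type*} [Ring A] (g : ℝ → ℝ → A) (α : Finset ℝ) : A :=
  ((consecPairs α).map fun p => g p.1 p.2).prod

/-- The sum `U t₁ t₂ + U t₂ t₃ + ⋯ + U tₙ tₙ₊₁` over the consecutive points of a
partition. -/
noncomputable def partitionSum {A : Type*} [Ring A] (U : ℝ → ℝ → A) (α : Finset ℝ) : A :=
  ((consecPairs α).map fun p => U p.1 p.2).sum

/-- The mesh `max_i (t_{i+1} - t_i)` of a partition. -/
noncomputable def mesh (α : Finset ℝ) : ℝ :=
  ((consecPairs α).map fun p => p.2 - p.1).foldr max 0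

/-- `IsNetLimit g r s u` means that the net `α ↦ partitionProd g α`, indexed by the
partitions of `[r, s]` partially ordered by inclusion, converges to `u`. -/
def IsNetLimit {A : Type*} [NormedRing A] (g : ℝ → ℝ → A) (r s : ℝ) (u : A) : Prop :=
  ∀ ε > 0, ∃ γ : Finset ℝ, IsPartition r s γ ∧
    ∀ α : Finset ℝ, IsPartition r s α → γ ⊆ α → ‖partitionProd g α - u‖ < ε

section MyAux
open List

section Aux
variable {A : Type*} [NormedRing A] [NormOneClass A]

lemma myQ_pos (xs : List A) : 1 ≤ (xs.map fun x => 1 + ‖x‖).prod := by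
  induction xs with
  | nil => simp
  | cons x xs ih =>
    simp only [List.map_cons, List.prod_cons]
    nlinarith [norm_nonneg x]

lemma myQ_norm (xs : List A) :
    ‖(xs.map fun x => (1 : A) + x).prod‖ ≤ (xs.map fun x => 1 + ‖x‖).prod := by
  induction xs with
  | nil => simp
  | cons x xs ih =>
    simp only [List.map_cons, List.prod_cons]
    calc ‖(1 + x) * (xs.map fun x => (1:A) + x).prod‖
        ≤ ‖(1 : A) + x‖ * ‖(xs.map fun x => (1:A) + x).prod‖ := norm_mul_le _ _
      _ ≤ (1 + ‖x‖) * (xs.map fun x => 1 + ‖x‖).prod := by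
          have h1 : ‖(1 : A) + x‖ ≤ 1 + ‖x‖ := by
            simpa using norm_add_le (1 : A) x
          have := norm_nonneg (xs.map fun x => (1:A) + x).prod
          nlinarith [norm_nonneg x, norm_nonneg (1 + x)]

lemma key1 (xs : List A) :
    ‖(xs.map fun x => (1 : A) + x).prod - 1‖ ≤ (xs.map fun x => 1 + ‖x‖).prod - 1 := by
  induction xs with
  | nil => simp
  | cons x xs ih =>
    simp only [List.map_cons, List.prod_cons]
    set P := (xs.map fun x => (1:A) + x).prod with hP
    set Q := (xs.map fun x => 1 + ‖x‖).prod with hQ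
    have he : (1 + x) * P - 1 = (P - 1) + x * P := by noncomm_ring
    rw [he]
    calc ‖(P - 1) + x * P‖ ≤ ‖P - 1‖ + ‖x * P‖ := norm_add_le _ _
      _ ≤ (Q - 1) + ‖x‖ * Q := by
          have h2 : ‖x * P‖ ≤ ‖x‖ * ‖P‖ := norm_mul_le _ _
          have h3 : ‖P‖ ≤ Q := myQ_norm xs
          nlinarith [norm_nonneg x]
      _ = (1 + ‖x‖) * Q - 1 := by ring

lemma key2 (xs : List A) :
    ‖(xs.map fun x => (1 : A) + x).prod - 1 - xs.sum‖ ≤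
      (xs.map fun x => 1 + ‖x‖).prod - 1 - (xs.map norm).sum := by
  induction xs with
  | nil => simp
  | cons x xs ih =>
    simp only [List.map_cons, List.prod_cons, List.sum_cons]
    set P := (xs.map fun x => (1:A) + x).prod with hP
    set Q := (xs.map fun x => 1 + ‖x‖).prod with hQ
    have he : (1 + x) * P - 1 - (x + xs.sum) = (P - 1 - xs.sum) + x * (P - 1) := by
      noncomm_ring
    rw [he]
    calc ‖(P - 1 - xs.sum) + x * (P - 1)‖
        ≤ ‖P - 1 - xs.sum‖ + ‖x * (P - 1)‖ := norm_add_le _ _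
      _ ≤ (Q - 1 - (xs.map norm).sum) + ‖x‖ * (Q - 1) := by
          have h2 : ‖x * (P - 1)‖ ≤ ‖x‖ * ‖P - 1‖ := norm_mul_le _ _
          have h3 : ‖P - 1‖ ≤ Q - 1 := key1 xs
          nlinarith [norm_nonneg x]
      _ = (1 + ‖x‖) * Q - 1 - (‖x‖ + (xs.map norm).sum) := by ring

lemma myQ_le_exp (xs : List A) :
    (xs.map fun x => 1 + ‖x‖).prod ≤ Real.exp ((xs.map norm).sum) := by
  induction xs with
  | nil => simp
  | cons x xs ih =>
    simp only [List.map_cons, List.prod_cons, List.sum_cons, Real.exp_add]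
    have h1 : 1 + ‖x‖ ≤ Real.exp ‖x‖ := by
      have := Real.add_one_le_exp ‖x‖; linarith
    have h2 : (0:ℝ) < Real.exp ‖x‖ := Real.exp_pos _
    have h3 : 1 ≤ (xs.map fun x => 1 + ‖x‖).prod := myQ_pos xs
    nlinarith [norm_nonneg x, Real.exp_pos ((xs.map norm).sum)]

end Aux

lemma exp_mono_aux {T M : ℝ} (hT : 0 ≤ T) (hTM : T ≤ M) :
    Real.exp T - 1 - T ≤ Real.exp M - 1 - M := by
  have h1 := Real.add_one_le_exp (M - T)
  have h2 : Real.exp M = Real.exp T * Real.exp (M - T) := by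
    rw [← Real.exp_add]; ring_nf
  have h3 : 1 ≤ Real.exp T := Real.one_le_exp hT
  nlinarith [Real.exp_pos (M - T)]

lemma exp_quad {x : ℝ} (hx : 0 ≤ x) :
    Real.exp x - 1 - x ≤ x ^ 2 / 2 * Real.exp x := by
  have h1 : Real.exp x - 1 - x = ∫ t in (0:ℝ)..x, (Real.exp t - 1) := by
    rw [intervalIntegral.integral_sub (Real.continuous_exp.intervalIntegrable _ _)
      (intervalIntegrable_const), integral_exp, intervalIntegral.integral_const]
    simp
    
  rw [h1]
  have h2 : (∫ t in (0:ℝ)..x, (Real.exp t - 1)) ≤ ∫ t in (0:ℝ)..x, t * Real.exp x := by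
    apply intervalIntegral.integral_mono_on hx
    · exact (Real.continuous_exp.intervalIntegrable _ _).sub intervalIntegrable_const
    · exact (intervalIntegral.intervalIntegrable_id).mul_const _
    · intro t ht
      rw [Set.mem_Icc] at ht
      have h4 : Real.exp t - 1 ≤ t * Real.exp t := by
        have := Real.add_one_le_exp (-t)
        have h5 : Real.exp (-t) * Real.exp t = 1 := by
          rw [← Real.exp_add]; simp
        nlinarith [Real.exp_pos t]
      have h6 : t * Real.exp t ≤ t * Real.exp x :=
        mul_le_mul_of_nonneg_left (Real.exp_le_exp.mpr ht.2) ht.1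
      linarith
  calc (∫ t in (0:ℝ)..x, (Real.exp t - 1)) ≤ ∫ t in (0:ℝ)..x, t * Real.exp x := h2
    _ = x ^ 2 / 2 * Real.exp x := by
        rw [intervalIntegral.integral_mul_const, integral_id]; ring


lemma chain'_lt_getLast : ∀ (rest : List ℝ) (x y : ℝ),
    (x :: y :: rest).Chain' (· < ·) → x < (x :: y :: rest).getLast (by simp) := by
  intro rest
  induction rest with
  | nil => intro x y h; simpa using (List.isChain_cons_cons.mp h).1
  | cons z rest ih =>
    intro x y h
    rw [List.Chain', List.isChain_cons_cons] at h
    have h2 := ih y z h.2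
    have : (x :: y :: z :: rest).getLast (by simp) = (y :: z :: rest).getLast (by simp) := by
      simp [List.getLast_cons]
    rw [this]
    exact lt_trans h.1 h2

lemma zip_tail_rel : ∀ (l : List ℝ), l.Chain' (· < ·) → ∀ p ∈ l.zip l.tail, p.1 < p.2 := by
  intro l
  induction l with
  | nil => simp
  | cons x l ih =>
    intro h p hp
    cases l with
    | nil => simp at hp
    | cons y rest =>
      rw [List.Chain', List.isChain_cons_cons] at h
      simp only [List.tail_cons, List.zip_cons_cons, List.mem_cons] at hp
      rcases hp with rfl | hp
      · exact h.1
      · exact ih h.2 p (by simpa using hp)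

lemma telescope_len : ∀ (l : List ℝ) (h : l ≠ []),
    ((l.zip l.tail).map fun p => p.2 - p.1).sum = l.getLast h - l.head h := by
  intro l
  induction l with
  | nil => simp
  | cons x l ih =>
    intro _
    cases l with
    | nil => simp
    | cons y rest =>
      have := ih (by simp)
      simp only [List.tail_cons, List.zip_cons_cons, List.map_cons, List.sum_cons] at *
      rw [this]
      have hgl : (x :: y :: rest).getLast (by simp) = (y :: rest).getLast (by simp) := by
        simp [List.getLast_cons]
      rw [hgl]
      simp
      

lemma sorted_le_getLast : ∀ (l : List ℝ) (h : l ≠ []), l.Pairwise (· ≤ ·) →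
    ∀ z ∈ l, z ≤ l.getLast h := by
  intro l
  induction l with
  | nil => simp
  | cons x l ih =>
    intro _ hs z hz
    cases l with
    | nil => simp at hz; simp [hz]
    | cons y rest =>
      have hgl : (x :: y :: rest).getLast (by simp) = (y :: rest).getLast (by simp) := by
        simp [List.getLast_cons]
      rw [hgl]
      rw [List.pairwise_cons] at hs
      rcases List.mem_cons.mp hz with rfl | hz
      · exact le_trans (hs.1 _ (List.getLast_mem _)) (le_refl _)
      · exact ih (by simp) hs.2 z hz

section Tele
variable {A : Type*} [NormedRing A]

lemma telescope_sum (a : ℝ → ℝ → A)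
    (ha_add : ∀ r s t, 0 ≤ r → r < s → s < t → a r t = a r s + a s t) :
    ∀ (rest : List ℝ) (x y : ℝ), (x :: y :: rest).Chain' (· < ·) → 0 ≤ x →
    ((((x :: y :: rest).zip (y :: rest)).map fun p => a p.1 p.2).sum
      = a x ((x :: y :: rest).getLast (by simp))) := by
  intro rest
  induction rest with
  | nil => intro x y _ _; simp
  | cons z rest ih =>
    intro x y h hx
    rw [List.Chain', List.isChain_cons_cons] at h
    have hy : 0 ≤ y := le_of_lt (lt_of_le_of_lt hx h.1)
    have := ih y z h.2 hy
    simp only [List.zip_cons_cons, List.map_cons, List.sum_cons] at *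
    rw [this]
    have hgl : (x :: y :: z :: rest).getLast (by simp) = (y :: z :: rest).getLast (by simp) := by
      simp [List.getLast_cons]
    rw [hgl]
    exact (ha_add x y _ hx h.1 (chain'_lt_getLast rest y z h.2)).symm

end Tele

lemma main_est {A : Type*} [NormedRing A] [NormOneClass A]
    (C : ℝ) (a : ℝ → ℝ → A)
    (ha_norm : ∀ r s, 0 ≤ r → r ≤ s → ‖a r s‖ ≤ (s - r) * C)
    (ha_add : ∀ r s t, 0 ≤ r → r < s → s < t → a r t = a r s + a s t)
    (r s : ℝ) (hr : 0 ≤ r) (hrs : r < s) (α : Finset ℝ) (hα : IsPartition r s α) :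
    ‖partitionProd (fun p q => (1 : A) + a p q) α - (1 + a r s)‖ ≤
      (1 / 2) * (s - r) ^ 2 * C ^ 2 * Real.exp (C * (s - r)) := by
  obtain ⟨hrα, hsα, hmem⟩ := hα
  have hsorted : (α.sort (· ≤ ·)).Pairwise (· ≤ ·) := Finset.pairwise_sort _ _
  have hchain : (α.sort (· ≤ ·)).Chain' (· < ·) := (Finset.sortedLT_sort α).isChain
  have hrl : r ∈ α.sort (· ≤ ·) := (Finset.mem_sort _).mpr hrα
  have hsl : s ∈ α.sort (· ≤ ·) := (Finset.mem_sort _).mpr hsα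
  rcases hsort : α.sort (· ≤ ·) with _ | ⟨x, _ | ⟨y, rest⟩⟩
  · rw [hsort] at hrl; simp at hrl
  · rw [hsort] at hrl hsl
    simp at hrl hsl
    rw [hrl, hsl] at hrs; exact absurd hrs (lt_irrefl _)
  · rw [hsort] at hsorted hchain hrl hsl
    -- x = r
    have hxα : x ∈ α := (Finset.mem_sort _).mp (by rw [hsort]; exact List.mem_cons_self)
    have hxr : x = r := by
      rcases List.mem_cons.mp hrl with h | h
      · exact h.symm
      · have h1 : x ≤ r := (List.pairwise_cons.mp hsorted).1 r h
        have h2 : r ≤ x := (hmem x hxα).1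
        linarith
    -- getLast = s
    set L := (x :: y :: rest).getLast (by simp) with hL
    have hLα : L ∈ α := (Finset.mem_sort _).mp (by rw [hsort]; exact List.getLast_mem _)
    have hLs : L = s := by
      have h1 : s ≤ L := sorted_le_getLast _ (by simp) hsorted s hsl
      have h2 : L ≤ s := (hmem L hLα).2
      linarith
    -- setup
    set zp := (x :: y :: rest).zip (y :: rest) with hzp
    set xs := zp.map (fun p => a p.1 p.2) with hxs
    have hprod : partitionProd (fun p q => (1 : A) + a p q) α
        = (xs.map fun v => (1 : A) + v).prod := by
      rw [partitionProd, consecPairs, hsort, hxs, List.map_map]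
      rfl
    have hsum : xs.sum = a r s := by
      rw [hxs, hzp, telescope_sum a ha_add rest x y hchain (hxr ▸ hr), ← hL, hLs, hxr]
    -- norms
    set T := (xs.map norm).sum with hT
    have hT0 : 0 ≤ T := by
      rw [hT]
      apply List.sum_nonneg
      intro u hu
      obtain ⟨v, hv, rfl⟩ := List.mem_map.mp hu
      exact norm_nonneg v
    have hTM : T ≤ C * (s - r) := by
      have hle : T ≤ ((zp.map fun p => p.2 - p.1).sum) * C := by
        rw [hT, hxs, List.map_map, ← List.sum_map_mul_right]
        apply List.sum_le_sum
        intro p hp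
        rcases p with ⟨u, v⟩
        have huv : u < v := zip_tail_rel (x :: y :: rest) hchain (u, v) hp
        have huα : u ∈ α := (Finset.mem_sort _).mp
          (by rw [hsort]; exact (List.of_mem_zip hp).1)
        have hu0 : 0 ≤ u := le_trans hr (hmem u huα).1
        exact ha_norm u v hu0 (le_of_lt huv)
      have htel : (zp.map fun p => p.2 - p.1).sum = s - r := by
        have := telescope_len (x :: y :: rest) (by simp)
        simp only [List.tail_cons] at this
        rw [hzp, this, ← hL, hLs]
        simp [hxr]
      rw [htel] at hle
      linarith [hle]
    -- assemble
    have hkey := key2 xs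
    have hQ := myQ_le_exp xs
    rw [hprod]
    have e1 : (xs.map fun v => (1 : A) + v).prod - (1 + a r s)
        = (xs.map fun v => (1 : A) + v).prod - 1 - xs.sum := by
      rw [hsum]; abel
    rw [e1]
    set M := C * (s - r) with hM
    have hM0 : 0 ≤ M := le_trans hT0 hTM
    calc ‖(xs.map fun v => (1 : A) + v).prod - 1 - xs.sum‖
        ≤ (xs.map fun v => 1 + ‖v‖).prod - 1 - T := hkey
      _ ≤ Real.exp T - 1 - T := by linarith [hQ]
      _ ≤ Real.exp M - 1 - M := exp_mono_aux hT0 hTM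
      _ ≤ M ^ 2 / 2 * Real.exp M := exp_quad hM0
      _ = (1 / 2) * (s - r) ^ 2 * C ^ 2 * Real.exp (C * (s - r)) := by
          rw [hM]; ring

end MyAux

/-- the estimate `‖U_{r,s} - g_{r,s}‖ ≤ (1/2)·(s - r)²·C²·exp(C·(s - r))`. -/

theorem stmt_11 {A : Type*} [NormedRing A] [NormOneClass A] [NormedAlgebra ℂ A]
    [CompleteSpace A]
    (C : ℝ) (hC : 0 < C)
    (a : ℝ → ℝ → A)
    (ha_norm : ∀ r s, 0 ≤ r → r ≤ s → ‖a r s‖ ≤ (s - r) * C)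
    (ha_add : ∀ r s t, 0 ≤ r → r < s → s < t → a r t = a r s + a s t)
    (U : ℝ → ℝ → A)
    (hU : ∀ r s, 0 ≤ r → r < s → IsNetLimit (fun p q => (1 : A) + a p q) r s (U r s)) :
    ∀ r s, 0 ≤ r → r < s →
      ‖U r s - (1 + a r s)‖ ≤ (1 / 2) * (s - r) ^ 2 * C ^ 2 * Real.exp (C * (s - r)) := by
  intro r s hr hrs
  set B := (1 / 2) * (s - r) ^ 2 * C ^ 2 * Real.exp (C * (s - r)) with hB
  have hstep : ∀ ε > 0, ‖U r s - (1 + a r s)‖ ≤ B + ε := by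
    intro ε hε
    obtain ⟨γ, hγ, hγ2⟩ := hU r s hr hrs ε hε
    have h1 : ‖partitionProd (fun p q => (1 : A) + a p q) γ - U r s‖ < ε :=
      hγ2 γ hγ (subset_refl _)
    have h2 := main_est C a ha_norm ha_add r s hr hrs γ hγ
    calc ‖U r s - (1 + a r s)‖
        ≤ ‖U r s - partitionProd (fun p q => (1 : A) + a p q) γ‖
          + ‖partitionProd (fun p q => (1 : A) + a p q) γ - (1 + a r s)‖ := by
          have := norm_sub_le_norm_sub_add_norm_sub (U r s)
            (partitionProd (fun p q => (1 : A) + a p q) γ) (1 + a r s)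
          exact this
      _ ≤ ε + B := by
          rw [norm_sub_rev] at h1
          linarith
      _ = B + ε := by ring
  exact le_of_forall_pos_le_add hstep
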